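/- Let Z be a Banach space with the Daugavet property, B₀ : X × Y → Z a norming bilinear map (i.e., B₀(U_X × U_Y) = U_Z, where U denotes open unit balls), and B : X × Y → Z a norm-one continuous bilinear map. If for every ε > 0 there exist a slice S₀ ∈ S_{B₀} and z in the unit sphere of Z such that B(S₀) ⊆ B_ε(z), then ‖B₀ + B‖ = 1 + ‖B‖ = 2. -/

import Mathlib

/-- A Banach space has the Daugavet property if `‖Id + K‖ = 1 + ‖K‖` for every
rank-one operator `K = z' ⊗ z`. -/
def DaugavetProperty (Z : Type*) [NormedAddCommGroup Z] [NormedSpace ℝ Z] : Prop :=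
  ∀ (z' : Z →L[ℝ] ℝ) (z : Z),
    ‖ContinuousLinearMap.id ℝ Z + z'.smulRight z‖ = 1 + ‖z'.smulRight z‖

variable {X Y Z : Type*} [NormedAddCommGroup X] [NormedSpace ℝ X]
  [NormedAddCommGroup Y] [NormedSpace ℝ Y]
  [NormedAddCommGroup Z] [NormedSpace ℝ Z]

/-- The adjoint bilinear form `⟨B, z'⟩ : (x,y) ↦ ⟨B(x,y), z'⟩`. -/
noncomputable def adjointForm (B : X →L[ℝ] Y →L[ℝ] Z) (z' : Z →L[ℝ] ℝ) :
    X →L[ℝ] Y →L[ℝ] ℝ :=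
  (ContinuousLinearMap.compL ℝ Y Z ℝ z').comp B

/-- The natural set of slices (of `B_X × B_Y`) associated to a bilinear map `B`:
the slices `S(B_{z'}, ε)` of the normalised adjoint forms. -/
noncomputable def bilSlices (B : X →L[ℝ] Y →L[ℝ] Z) : Set (Set (X × Y)) :=
  {S | ∃ (z' : Z →L[ℝ] ℝ) (ε : ℝ), 0 < ε ∧ ε < 1 ∧ adjointForm B z' ≠ 0 ∧
    S = {p | ‖p.1‖ ≤ 1 ∧ ‖p.2‖ ≤ 1 ∧
      (1 - ε) * ‖adjointForm B z'‖ ≤ adjointForm B z' p.1 p.2}}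

/-- From the Daugavet property: in each slice of the unit ball determined by a
nonzero functional `z'` there is a point `w` (in the open ball) with `‖w + z‖`
almost `2`, for any unit vector `z`. -/
lemma daugavet_slice (hZ : DaugavetProperty Z) (z' : Z →L[ℝ] ℝ) (hz' : z' ≠ 0)
    (z : Z) (hz : ‖z‖ = 1) {δ : ℝ} (hδ : 0 < δ) :
    ∃ w : Z, ‖w‖ < 1 ∧ (1 - δ) * ‖z'‖ ≤ z' w ∧ 2 - 2 * δ ≤ ‖w + z‖ := by
  have hz'pos : (0 : ℝ) < ‖z'‖ := norm_pos_iff.2 hz'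
  set z'' : Z →L[ℝ] ℝ := ‖z'‖⁻¹ • z' with hz''
  have hz''norm : ‖z''‖ = 1 := by
    rw [hz'']
    rw [norm_smul ‖z'‖⁻¹ z', norm_inv, norm_norm, inv_mul_cancel₀ hz'pos.ne']
  set K := z''.smulRight z with hK
  have hKnorm : ‖K‖ = 1 := by
    rw [hK, ContinuousLinearMap.norm_smulRight_apply, hz''norm, hz, one_mul]
  have hIdK : ‖ContinuousLinearMap.id ℝ Z + K‖ = 2 := by
    rw [hZ z'' z, hKnorm]; norm_num
  have hlt : 2 - δ < ‖ContinuousLinearMap.id ℝ Z + K‖ := by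
    rw [hIdK]; linarith
  obtain ⟨w₁, hw₁, hw₁lt⟩ :=
    (ContinuousLinearMap.id ℝ Z + K).exists_lt_apply_of_lt_opNorm hlt
  have happ : ∀ v : Z, (ContinuousLinearMap.id ℝ Z + K) v = v + z'' v • z := by
    intro v; simp [hK]
  -- pick the sign so that the functional value is nonnegative
  obtain ⟨w, hw, ht0, hwlt⟩ : ∃ w : Z, ‖w‖ < 1 ∧ 0 ≤ z'' w ∧
      2 - δ < ‖w + z'' w • z‖ := by
    rcases le_or_gt 0 (z'' w₁) with h | h
    · exact ⟨w₁, hw₁, h, by rw [← happ]; exact hw₁lt⟩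
    · refine ⟨-w₁, by simpa using hw₁, by simp [le_of_lt (neg_pos.2 h)], ?_⟩
      have : ‖-w₁ + z'' (-w₁) • z‖ = ‖w₁ + z'' w₁ • z‖ := by
        rw [← norm_neg]; congr 1; simp; abel
      rw [this, ← happ]; exact hw₁lt
  set t := z'' w with htdef
  have ht1 : t ≤ 1 := by
    calc t ≤ |t| := le_abs_self t
    _ = ‖z'' w‖ := (Real.norm_eq_abs t).symm
    _ ≤ ‖z''‖ * ‖w‖ := z''.le_opNorm w
    _ ≤ 1 := by rw [hz''norm, one_mul]; exact hw.le
  have htz : ‖t • z‖ = t := by rw [norm_smul, hz, mul_one, Real.norm_eq_abs, abs_of_nonneg ht0]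
  have htbig : 1 - δ < t := by
    have : ‖w + t • z‖ ≤ ‖w‖ + t := by
      calc ‖w + t • z‖ ≤ ‖w‖ + ‖t • z‖ := norm_add_le _ _
      _ = ‖w‖ + t := by rw [htz]
    nlinarith [hwlt]
  have hwz : 2 - 2 * δ ≤ ‖w + z‖ := by
    have h1 : ‖w + t • z‖ ≤ ‖w + z‖ + ‖(t - 1) • z‖ := by
      have : w + t • z = (w + z) + (t - 1) • z := by
        rw [sub_smul, one_smul]; abel
      rw [this]; exact norm_add_le _ _
    have h2 : ‖(t - 1) • z‖ = 1 - t := by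
      rw [norm_smul, hz, mul_one, Real.norm_eq_abs, abs_of_nonpos (by linarith), neg_sub]
    nlinarith [hwlt]
  refine ⟨w, hw, ?_, hwz⟩
  have : z'' w = ‖z'‖⁻¹ * z' w := by rw [hz'']; simp
  have hz'w : z' w = ‖z'‖ * t := by
    rw [htdef, this]; field_simp
  rw [hz'w, mul_comm]
  exact mul_le_mul_of_nonneg_left (by linarith) hz'pos.le

set_option maxHeartbeats 1000000 in
/-- let `Z` have the Daugavet property, `B₀` a norming bilinear
map and `B` a norm-one bilinear map sending, for each `ε > 0`, some slice of
`S_{B₀}` into an `ε`-ball around a unit vector.  Then `‖B₀ + B‖ = 1 + ‖B‖ = 2`. -/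
theorem bilinear_daugavet_of_slice_into_ball
    [CompleteSpace X] [CompleteSpace Y] [CompleteSpace Z]
    (hZ : DaugavetProperty Z)
    (B₀ : X →L[ℝ] Y →L[ℝ] Z)
    (hnorming : {z : Z | ∃ (x : X) (y : Y), ‖x‖ < 1 ∧ ‖y‖ < 1 ∧ B₀ x y = z} =
      Metric.ball (0 : Z) 1)
    (B : X →L[ℝ] Y →L[ℝ] Z) (hB : ‖B‖ = 1)
    (hsl : ∀ ε > (0 : ℝ), ∃ S₀ ∈ bilSlices B₀, ∃ z : Z, ‖z‖ = 1 ∧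
      ∀ p ∈ S₀, ‖B p.1 p.2 - z‖ ≤ ε) :
    ‖B₀ + B‖ = 2 := by
  -- ‖B₀ x y‖ ≤ ‖x‖ * ‖y‖
  have hball : ∀ x : X, ∀ y : Y, ‖x‖ < 1 → ‖y‖ < 1 → ‖B₀ x y‖ < 1 := by
    intro x y hx hy
    have : B₀ x y ∈ Metric.ball (0 : Z) 1 := by
      rw [← hnorming]; exact ⟨x, y, hx, hy, rfl⟩
    simpa [mem_ball_zero_iff] using this
  have hbound : ∀ x : X, ∀ y : Y, ‖B₀ x y‖ ≤ ‖x‖ * ‖y‖ := by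
    intro x y
    have key : ∀ ε : ℝ, 0 < ε → ‖B₀ x y‖ ≤ (‖x‖ + ε) * (‖y‖ + ε) := by
      intro ε hε
      have hxp : (0 : ℝ) < ‖x‖ + ε := by positivity
      have hyp : (0 : ℝ) < ‖y‖ + ε := by positivity
      have hx' : ‖(‖x‖ + ε)⁻¹ • x‖ < 1 := by
        rw [norm_smul, norm_inv, Real.norm_eq_abs, abs_of_pos hxp,
          inv_mul_lt_iff₀ hxp, mul_one]; linarith
      have hy' : ‖(‖y‖ + ε)⁻¹ • y‖ < 1 := by
        rw [norm_smul, norm_inv, Real.norm_eq_abs, abs_of_pos hyp,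
          inv_mul_lt_iff₀ hyp, mul_one]; linarith
      have h := hball _ _ hx' hy'
      simp only [map_smul, ContinuousLinearMap.smul_apply, norm_smul, norm_inv,
        Real.norm_eq_abs, abs_of_pos hxp, abs_of_pos hyp] at h
      calc ‖B₀ x y‖ = (‖x‖ + ε) * ((‖y‖ + ε) * ((‖y‖ + ε)⁻¹ * ((‖x‖ + ε)⁻¹ * ‖B₀ x y‖))) := by
            field_simp
      _ ≤ (‖x‖ + ε) * ((‖y‖ + ε) * 1) := by
            apply mul_le_mul_of_nonneg_left _ hxp.le
            exact mul_le_mul_of_nonneg_left h.le hyp.le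
      _ = (‖x‖ + ε) * (‖y‖ + ε) := by ring
    have htend : Filter.Tendsto (fun ε : ℝ => (‖x‖ + ε) * (‖y‖ + ε)) (nhdsWithin 0 (Set.Ioi 0))
        (nhds (‖x‖ * ‖y‖)) := by
      have : Filter.Tendsto (fun ε : ℝ => (‖x‖ + ε) * (‖y‖ + ε)) (nhds 0)
          (nhds ((‖x‖ + 0) * (‖y‖ + 0))) := by
        apply Filter.Tendsto.mul <;> exact (tendsto_const_nhds.add Filter.tendsto_id)
      simpa using this.mono_left nhdsWithin_le_nhds
    exact ge_of_tendsto htend (Filter.eventually_of_mem self_mem_nhdsWithin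
      (fun ε hε => key ε hε))
  have hB₀ : ‖B₀‖ ≤ 1 := by
    apply ContinuousLinearMap.opNorm_le_bound _ zero_le_one
    intro x
    apply ContinuousLinearMap.opNorm_le_bound _ (by positivity)
    intro y
    calc ‖B₀ x y‖ ≤ ‖x‖ * ‖y‖ := hbound x y
    _ = 1 * ‖x‖ * ‖y‖ := by ring
  -- upper bound
  have hub : ‖B₀ + B‖ ≤ 2 := by
    calc ‖B₀ + B‖ ≤ ‖B₀‖ + ‖B‖ := ContinuousLinearMap.opNorm_add_le _ _
    _ ≤ 2 := by rw [hB]; linarith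
  -- lower bound
  have hlb : (2 : ℝ) ≤ ‖B₀ + B‖ := by
    apply le_of_forall_pos_le_add
    intro θ hθ
    obtain ⟨S₀, hS₀, z, hz, hball'⟩ := hsl (θ / 2) (by linarith)
    obtain ⟨z', ε₀, hε₀, hε₀1, hA, hSdef⟩ := hS₀
    have hz'ne : z' ≠ 0 := by
      intro h
      apply hA
      rw [h, adjointForm]
      ext u v
      simp
    set δ := min ε₀ (θ / 4) with hδdef
    have hδpos : 0 < δ := lt_min hε₀ (by linarith)
    obtain ⟨w, hw, hzw, hwz⟩ := daugavet_slice hZ z' hz'ne z hz hδpos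
    have hwball : w ∈ Metric.ball (0 : Z) 1 := mem_ball_zero_iff.2 hw
    rw [← hnorming] at hwball
    obtain ⟨x, y, hx, hy, hxy⟩ := hwball
    -- ‖adjointForm B₀ z'‖ ≤ ‖z'‖
    have hAle : ‖adjointForm B₀ z'‖ ≤ ‖z'‖ := by
      apply ContinuousLinearMap.opNorm_le_bound _ (norm_nonneg _)
      intro u
      apply ContinuousLinearMap.opNorm_le_bound _ (by positivity)
      intro v
      have : adjointForm B₀ z' u v = z' (B₀ u v) := rfl
      rw [this]
      calc ‖z' (B₀ u v)‖ ≤ ‖z'‖ * ‖B₀ u v‖ := z'.le_opNorm _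
      _ ≤ ‖z'‖ * (‖u‖ * ‖v‖) := by
            exact mul_le_mul_of_nonneg_left (hbound u v) (norm_nonneg _)
      _ = ‖z'‖ * ‖u‖ * ‖v‖ := by ring
    -- membership of (x, y) in the slice
    have hmem : (x, y) ∈ S₀ := by
      rw [hSdef]
      refine ⟨hx.le, hy.le, ?_⟩
      have hApp : adjointForm B₀ z' x y = z' w := by
        show z' (B₀ x y) = z' w
        rw [hxy]
      rw [hApp]
      calc (1 - ε₀) * ‖adjointForm B₀ z'‖ ≤ (1 - ε₀) * ‖z'‖ :=
            mul_le_mul_of_nonneg_left hAle (by linarith)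
      _ ≤ (1 - δ) * ‖z'‖ := by
            apply mul_le_mul_of_nonneg_right _ (norm_nonneg _)
            have : δ ≤ ε₀ := min_le_left _ _
            linarith
      _ ≤ z' w := hzw
    have hBz := hball' (x, y) hmem
    have hδθ : δ ≤ θ / 4 := min_le_right _ _
    have hlow : 2 - θ ≤ ‖(B₀ + B) x y‖ := by
      have heq : (B₀ + B) x y = (w + z) + (B x y - z) := by
        simp only [ContinuousLinearMap.add_apply, ContinuousLinearMap.coe_add', Pi.add_apply]
        rw [hxy]; abel
      rw [heq]
      calc 2 - θ ≤ (2 - 2 * δ) - θ / 2 := by linarith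
      _ ≤ ‖w + z‖ - ‖B x y - z‖ := by
            have : ‖B x y - z‖ ≤ θ / 2 := hBz
            linarith
      _ ≤ ‖(w + z) + (B x y - z)‖ := by
            have h3 := norm_le_add_norm_add (w + z) (B x y - z)
            linarith
    have hup2 : ‖(B₀ + B) x y‖ ≤ ‖B₀ + B‖ := by
      calc ‖(B₀ + B) x y‖ ≤ ‖(B₀ + B) x‖ * ‖y‖ := ((B₀ + B) x).le_opNorm y
      _ ≤ ‖(B₀ + B) x‖ * 1 :=
            mul_le_mul_of_nonneg_left hy.le (ContinuousLinearMap.opNorm_nonneg _)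
      _ = ‖(B₀ + B) x‖ := mul_one _
      _ ≤ ‖B₀ + B‖ * ‖x‖ := (B₀ + B).le_opNorm x
      _ ≤ ‖B₀ + B‖ * 1 :=
            mul_le_mul_of_nonneg_left hx.le (ContinuousLinearMap.opNorm_nonneg _)
      _ = ‖B₀ + B‖ := mul_one _
    linarith
  linarith
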